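/- The hyperplane H(n) = {y ∈ ℝ^{n+1} : y_0 + ... + y_n = 0} is the union over i = 0,...,n of the simplicial cones C(n,i) = {y ∈ H(n) : y_i + y_{i+1} + ... + y_{i+t} ≤ 0 for all t = 0,...,n-1}, where indices are taken modulo n+1, and these cones have pairwise disjoint interiors. -/

import Mathlib

/-- The hyperplane `H(n) = {y ∈ ℝ^{n+1} : y_0 + ⋯ + y_n = 0}`. -/
def hyperplaneH (n : ℕ) : Set (Fin (n + 1) → ℝ) :=
  {y | ∑ i, y i = 0}

/-- The simplicial cone `C(n,i) ⊆ H(n)` cut out by requiring all consecutive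
cyclic partial sums `y_i + y_{i+1} + ⋯ + y_{i+t} ≤ 0` for `t = 0,…,n-1`
(indices mod `n+1`). -/
def coneC (n : ℕ) (i : Fin (n + 1)) : Set (Fin (n + 1) → ℝ) :=
  {y | y ∈ hyperplaneH n ∧
    ∀ t < n, ∑ s ∈ Finset.range (t + 1), y (i + (Fin.ofNat (n + 1) s)) ≤ 0}

open Fin.NatCast
open Fin.CommRing

lemma S_succ (n : ℕ) (y : Fin (n+1) → ℝ) (hy : ∑ i, y i = 0) (j : Fin (n+1)) :
    ∑ k ∈ Finset.range ((j+1 : Fin (n+1)).val), y (k : Fin (n+1)) =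
      (∑ k ∈ Finset.range j.val, y (k : Fin (n+1))) + y j := by
  rcases lt_or_eq_of_le (Nat.lt_succ_iff.mp j.isLt) with h | h
  · have hlast : j ≠ Fin.last n := by
      intro hj; rw [hj] at h; simp at h
    rw [Fin.val_add_one_of_lt (Fin.lt_last_iff_ne_last.mpr hlast), Finset.sum_range_succ]
    congr 1
    exact congrArg y (Fin.cast_val_eq_self j).symm ▸ rfl
  · have hj : j = Fin.last n := Fin.ext h
    have h1 : (j + 1 : Fin (n+1)).val = 0 := by
      rw [hj]; simp
    rw [h1, hj]
    simp only [Finset.range_zero, Finset.sum_empty, Fin.val_last]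
    have := Fin.sum_univ_eq_sum_range (fun k => y (k : Fin (n+1))) (n+1)
    rw [Finset.sum_range_succ] at this
    have hcast : ((n : ℕ) : Fin (n+1)) = Fin.last n := by
      ext; simp [Fin.val_natCast, Nat.mod_eq_of_lt]
    rw [hcast] at this
    have hall : ∑ k : Fin (n+1), y ((k : ℕ) : Fin (n+1)) = ∑ i, y i := by
      apply Finset.sum_congr rfl
      intro k _; rw [Fin.cast_val_eq_self]
    rw [hall, hy] at this
    linarith [this]

lemma partial_sum_eq (n : ℕ) (y : Fin (n+1) → ℝ) (hy : ∑ i, y i = 0)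
    (i : Fin (n+1)) (L : ℕ) :
    ∑ s ∈ Finset.range L, y (i + (s : Fin (n + 1))) =
      (∑ k ∈ Finset.range ((i + (L : Fin (n+1))).val), y (k : Fin (n+1))) -
      ∑ k ∈ Finset.range i.val, y (k : Fin (n+1)) := by
  induction L with
  | zero => simp
  | succ L ih =>
    rw [Finset.sum_range_succ, ih]
    have hstep : (i + ((L+1 : ℕ) : Fin (n+1))) = (i + (L : Fin (n+1))) + 1 := by
      push_cast; ring
    rw [hstep, S_succ n y hy]
    ring


lemma exists_strict (n : ℕ) (i : Fin (n+1)) :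
    ∃ z ∈ coneC n i, ∀ t < n,
      ∑ s ∈ Finset.range (t + 1), z (i + (s : Fin (n + 1))) < 0 := by
  set c : Fin (n+1) := i + ((n : ℕ) : Fin (n+1)) with hc
  have key : ∀ t < n, ∀ s ≤ t, i + ((s : ℕ) : Fin (n+1)) ≠ c := by
    intro t ht s hs h
    rw [hc] at h
    have h2 : ((s : ℕ) : Fin (n+1)) = ((n : ℕ) : Fin (n+1)) := add_left_cancel h
    have : s % (n+1) = n % (n+1) := by
      have := congrArg Fin.val h2
      simpa [Fin.val_natCast] using this
    rw [Nat.mod_eq_of_lt (by omega), Nat.mod_eq_of_lt (by omega)] at this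
    omega
  have hstrict : ∀ t < n,
      ∑ s ∈ Finset.range (t + 1), (fun k => if k = c then (n : ℝ) else -1) (i + (s : Fin (n + 1))) < 0 := by
    intro t ht
    have : ∀ s ∈ Finset.range (t+1),
        (fun k => if k = c then (n : ℝ) else -1) (i + (s : Fin (n + 1))) = -1 := by
      intro s hs
      simp only [Finset.mem_range] at hs
      simp only [if_neg (key t ht s (by omega))]
    rw [Finset.sum_congr rfl this, Finset.sum_const, Finset.card_range]
    have h1 : (0:ℝ) < t + 1 := by positivity
    simp only [nsmul_eq_mul, mul_neg_one]
    push_cast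
    linarith
  have hsum : ∑ k, (fun k => if k = c then (n : ℝ) else -1) k = 0 := by
    have he : ∀ k : Fin (n+1), (if k = c then (n : ℝ) else -1)
        = (if k = c then (n : ℝ) + 1 else 0) + (-1) := by
      intro k; split <;> ring
    simp only
    rw [Finset.sum_congr rfl (fun k _ => he k), Finset.sum_add_distrib,
      Finset.sum_ite_eq' Finset.univ c (fun _ => (n : ℝ) + 1), Finset.sum_const,
      Finset.card_univ]
    simp [Fintype.card_fin]
  exact ⟨_, ⟨hsum, fun t ht => le_of_lt (hstrict t ht)⟩, hstrict⟩

lemma interior_strict (n : ℕ) (i : Fin (n+1)) (y : Fin (n+1) → ℝ)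
    (hy : y ∈ intrinsicInterior ℝ (coneC n i)) :
    ∀ t < n, ∑ s ∈ Finset.range (t + 1), y (i + (s : Fin (n + 1))) < 0 := by
  intro t ht
  obtain ⟨z, hzC, hzstrict⟩ := exists_strict n i
  have hyC : y ∈ coneC n i := intrinsicInterior_subset hy
  rcases lt_or_eq_of_le (hyC.2 t ht) with h | h
  · exact h
  exfalso
  set A := affineSpan ℝ (coneC n i) with hA
  obtain ⟨x, hx, hxy⟩ := hy
  have hzA : z ∈ A := subset_affineSpan ℝ _ hzC
  have hyA : y ∈ A := hxy ▸ x.2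
  have hmem : ∀ r : ℝ, r • (y - z) + z ∈ A := by
    intro r
    have := AffineSubspace.smul_vsub_vadd_mem A r hyA hzA hzA
    simpa [vsub_eq_sub, vadd_eq_add] using this
  set g : ℝ → A := fun r => ⟨r • (y - z) + z, hmem r⟩ with hg
  have hgc : Continuous g := Continuous.subtype_mk
    ((continuous_id.smul continuous_const).add continuous_const) _
  have hg1 : g 1 = x := by
    apply Subtype.ext
    simp [hg, ← hxy]
  have hnhds : g ⁻¹' (Subtype.val ⁻¹' coneC n i) ∈ nhds (1:ℝ) := by
    apply hgc.continuousAt.preimage_mem_nhds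
    rw [hg1]
    exact mem_interior_iff_mem_nhds.mp hx
  obtain ⟨ε, hε, hball⟩ := Metric.mem_nhds_iff.mp hnhds
  have hr : (1 + ε/2 : ℝ) ∈ Metric.ball (1:ℝ) ε := by
    simp only [Metric.mem_ball, Real.dist_eq]
    rw [abs_of_pos (by linarith)]
    linarith
  have hrC : ((1 + ε/2 : ℝ) • (y - z) + z) ∈ coneC n i := hball hr
  have hle := hrC.2 t ht
  have hexp : ∑ s ∈ Finset.range (t+1), ((1 + ε/2 : ℝ) • (y - z) + z) (i + (s : Fin (n+1)))
      = (1 + ε/2) * (∑ s ∈ Finset.range (t+1), y (i + (s : Fin (n+1))))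
        - (ε/2) * (∑ s ∈ Finset.range (t+1), z (i + (s : Fin (n+1)))) := by
    simp only [Pi.add_apply, Pi.smul_apply, Pi.sub_apply, smul_eq_mul]
    rw [Finset.mul_sum, Finset.mul_sum]
    rw [← Finset.sum_sub_distrib]
    apply Finset.sum_congr rfl
    intro s _
    ring
  change ∑ s ∈ Finset.range (t+1), ((1 + ε/2 : ℝ) • (y - z) + z) (i + (s : Fin (n+1))) ≤ 0 at hle
  change ∑ s ∈ Finset.range (t+1), y (i + (s : Fin (n+1))) = 0 at h
  rw [hexp, h] at hle
  have hfz := hzstrict t ht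
  nlinarith
lemma union_part (n : ℕ) (y : Fin (n+1) → ℝ) (hy : y ∈ hyperplaneH n) :
    ∃ i, y ∈ coneC n i := by
  have hy' : ∑ i, y i = 0 := hy
  obtain ⟨i, -, hi⟩ := Finset.exists_max_image (Finset.univ : Finset (Fin (n+1)))
    (fun j => ∑ k ∈ Finset.range j.val, y (k : Fin (n+1))) ⟨0, Finset.mem_univ 0⟩
  refine ⟨i, hy, fun t ht => ?_⟩
  show ∑ s ∈ Finset.range (t + 1), y (i + (s : Fin (n+1))) ≤ 0
  rw [partial_sum_eq n y hy' i (t+1)]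
  have := hi (i + ((t+1 : ℕ) : Fin (n+1))) (Finset.mem_univ _)
  linarith [this]

/-- `H(n)` is the union of the cones `C(n,0), …, C(n,n)`, and these cones
have pairwise disjoint (relative) interiors. -/
theorem hyperplane_eq_union_cones (n : ℕ) :
    (⋃ i : Fin (n + 1), coneC n i) = hyperplaneH n ∧
    Pairwise (fun i j : Fin (n + 1) =>
      Disjoint (intrinsicInterior ℝ (coneC n i)) (intrinsicInterior ℝ (coneC n j))) := by
  constructor
  · apply Set.Subset.antisymm
    · intro y hy
      simp only [Set.mem_iUnion] at hy
      obtain ⟨i, hi⟩ := hy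
      exact hi.1
    · intro y hy
      simp only [Set.mem_iUnion]
      exact union_part n y hy
  · intro i j hij
    rw [Set.disjoint_left]
    intro y hyi hyj
    have hyC : y ∈ coneC n i := intrinsicInterior_subset hyi
    have hy0 : ∑ k, y k = 0 := hyC.1
    set d := (j - i).val with hd
    have hd1 : 1 ≤ d := by
      rcases Nat.eq_zero_or_pos d with h | h
      · exfalso
        apply hij
        have : j - i = 0 := Fin.ext h
        have := sub_eq_zero.mp this
        exact this.symm ▸ rfl
      · exact h
    have hdn : d ≤ n := Nat.lt_succ_iff.mp (j - i).isLt
    have h1 := interior_strict n i y hyi (d-1) (by omega)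
    have h2 := interior_strict n j y hyj (n-d) (by omega)
    have e1 : d - 1 + 1 = d := by omega
    have e2 : n - d + 1 = n + 1 - d := by omega
    rw [e1, partial_sum_eq n y hy0 i d] at h1
    rw [e2, partial_sum_eq n y hy0 j (n+1-d)] at h2
    have hc1 : ((d : ℕ) : Fin (n+1)) = j - i := by
      rw [hd, Fin.cast_val_eq_self]
    have hc2 : (((n+1-d : ℕ)) : Fin (n+1)) = i - j := by
      rw [Nat.cast_sub (by omega), hc1, Fin.natCast_self]
      ring
    rw [hc1, add_sub_cancel] at h1
    rw [hc2] at h2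
    have : j + (i - j) = i := by ring
    rw [this] at h2
    linarith
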